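/- Let H be a complex Hilbert space and M : H → H a continuous linear map with operator norm ‖M‖ ≤ 1. Let λ ∈ ℂ with |λ| = 1. Then for every integer k ≥ 1 and every u ∈ H, (M − λ·id)^k u = 0 implies M u = λ u. In other words, every eigenvalue of modulus one of a contraction is semi-simple. -/

import Mathlib

lemma stmt4_key {H : Type*} [NormedAddCommGroup H] [InnerProductSpace ℂ H]
    (M : H →L[ℂ] H) (hM : ‖M‖ ≤ 1) (l : ℂ) (hl : ‖l‖ = 1)
    (u v : H) (hu : M u = l • u + v) (hv : M v = l • v) : v = 0 := by
  have habs : ∀ m : ℕ, ‖l ^ m‖ = 1 := by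
    intro m
    rw [norm_pow, hl, one_pow]
  have hiter : ∀ n : ℕ, (M ^ (n + 1)) u = l ^ (n + 1) • u + (((n : ℂ) + 1) * l ^ n) • v := by
    intro n
    induction n with
    | zero => simpa using hu
    | succ n ih =>
      have hps : (M ^ (n + 2)) u = M ((M ^ (n + 1)) u) := by
        rw [pow_succ']; rfl
      rw [hps, ih, map_add, map_smul, map_smul, hu, hv]
      push_cast
      module
  have hb : ∀ n : ℕ, ((n : ℝ) + 1) * ‖v‖ ≤ 2 * ‖u‖ := by
    intro n
    have h1 : ‖(M ^ (n + 1)) u‖ ≤ ‖u‖ := by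
      calc ‖(M ^ (n + 1)) u‖ ≤ ‖M ^ (n + 1)‖ * ‖u‖ := (M ^ (n + 1)).le_opNorm u
        _ ≤ 1 * ‖u‖ := by
            apply mul_le_mul_of_nonneg_right _ (norm_nonneg u)
            exact (norm_pow_le' M n.succ_pos).trans
              (pow_le_one₀ (norm_nonneg M) hM)
        _ = ‖u‖ := one_mul _
    have h2 : ‖(((n : ℂ) + 1) * l ^ n) • v‖ = ((n : ℝ) + 1) * ‖v‖ := by
      rw [norm_smul, norm_mul, habs, mul_one]
      congr 1
      rw [show ((n : ℂ) + 1) = ((n + 1 : ℕ) : ℂ) by push_cast; ring]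
      rw [Complex.norm_natCast]
      push_cast; ring
    have h3 : ‖l ^ (n + 1) • u‖ = ‖u‖ := by rw [norm_smul, habs, one_mul]
    have h4 : ‖(((n : ℂ) + 1) * l ^ n) • v‖
        ≤ ‖(M ^ (n + 1)) u‖ + ‖l ^ (n + 1) • u‖ := by
      calc ‖(((n : ℂ) + 1) * l ^ n) • v‖
          = ‖(l ^ (n + 1) • u + (((n : ℂ) + 1) * l ^ n) • v) - l ^ (n + 1) • u‖ := by
            congr 1; abel
        _ ≤ ‖l ^ (n + 1) • u + (((n : ℂ) + 1) * l ^ n) • v‖ + ‖l ^ (n + 1) • u‖ :=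
            norm_sub_le _ _
        _ = ‖(M ^ (n + 1)) u‖ + ‖l ^ (n + 1) • u‖ := by rw [hiter n]
    rw [h2, h3] at h4
    linarith
  by_contra h
  have hv' : 0 < ‖v‖ := norm_pos_iff.mpr h
  obtain ⟨n, hn⟩ := exists_nat_gt (2 * ‖u‖ / ‖v‖)
  have h5 : 2 * ‖u‖ < (n : ℝ) * ‖v‖ := (div_lt_iff₀ hv').mp hn
  have h6 := hb n
  nlinarith

/-- Every eigenvalue of modulus one of a contraction on a complex Hilbert space is
semi-simple: `(M - λ·id)^k u = 0` for some `k ≥ 1` implies `M u = λ u`. -/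
theorem stmt4 {H : Type*} [NormedAddCommGroup H] [InnerProductSpace ℂ H] [CompleteSpace H]
    (M : H →L[ℂ] H) (hM : ‖M‖ ≤ 1) (l : ℂ) (hl : ‖l‖ = 1) :
    ∀ k : ℕ, 1 ≤ k → ∀ u : H, ((M - l • (1 : H →L[ℂ] H)) ^ k) u = 0 → M u = l • u := by
  intro k
  induction k with
  | zero => omega
  | succ k ih =>
    intro _ u hku
    rcases Nat.eq_zero_or_pos k with h0 | hpos
    · subst h0
      simp only [zero_add, pow_one, ContinuousLinearMap.sub_apply, ContinuousLinearMap.smul_apply,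
        ContinuousLinearMap.one_apply, sub_eq_zero] at hku
      exact hku
    · set v := (M - l • (1 : H →L[ℂ] H)) u with hvdef
      have hv0 : ((M - l • (1 : H →L[ℂ] H)) ^ k) v = 0 := by
        have hps : (M - l • (1 : H →L[ℂ] H)) ^ (k + 1)
            = (M - l • (1 : H →L[ℂ] H)) ^ k * (M - l • (1 : H →L[ℂ] H)) := pow_succ _ _
        rw [hps] at hku
        exact hku
      have hMv : M v = l • v := ih hpos v hv0
      have hu : M u = l • u + v := by
        rw [hvdef]
        simp only [ContinuousLinearMap.sub_apply, ContinuousLinearMap.smul_apply,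
          ContinuousLinearMap.one_apply]
        abel
      have hvz : v = 0 := stmt4_key M hM l hl u v hu hMv
      rw [hvz, add_zero] at hu
      exact hu
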